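/- Let A > 0 and k > 0. If ∫₀^{π/2} ((A·k)^{−1/4}·(A·cos θ) − (A·cos θ)^{3/4})·cos θ dθ = 0, then k = (√π · Γ(15/8) / (2 · Γ(11/8)))⁴, where Γ is the real Gamma function. -/

import Mathlib

open Real MeasureTheory intervalIntegral Set


lemma beta_real : ∫ x in (0:ℝ)..1, x ^ (-(1:ℝ)/2) * (1-x) ^ ((3:ℝ)/8)
    = Real.sqrt π * Real.Gamma (11/8) / Real.Gamma (15/8) := by
  have hs : (0:ℝ) < (1/2 : ℂ).re := by norm_num
  have ht : (0:ℝ) < (11/8 : ℂ).re := by norm_num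
  have hβ := Complex.Gamma_mul_Gamma_eq_betaIntegral hs ht
  rw [Complex.betaIntegral] at hβ
  have hcongr : ∫ x in (0:ℝ)..1, (x:ℂ) ^ ((1/2:ℂ) - 1) * (1 - (x:ℂ)) ^ ((11/8:ℂ) - 1)
      = ((∫ x in (0:ℝ)..1, x ^ (-(1:ℝ)/2) * (1-x) ^ ((3:ℝ)/8) : ℝ) : ℂ) := by
    rw [← intervalIntegral.integral_ofReal]
    apply intervalIntegral.integral_congr
    intro x hx
    rw [Set.uIcc_of_le (by norm_num : (0:ℝ) ≤ 1)] at hx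
    have hx0 : (0:ℝ) ≤ x := hx.1
    have hx1 : (0:ℝ) ≤ 1 - x := by linarith [hx.2]
    have e1 : ((1/2:ℂ) - 1) = ((-(1:ℝ)/2 : ℝ) : ℂ) := by norm_num
    have e2 : ((11/8:ℂ) - 1) = (((3:ℝ)/8 : ℝ) : ℂ) := by norm_num
    simp only [e1, e2]
    simp only [Complex.ofReal_mul, ← Complex.ofReal_cpow hx0, ← Complex.ofReal_cpow hx1,
      Complex.ofReal_sub, Complex.ofReal_one]
    rw [show ((1:ℂ) - (x:ℂ)) = ((1-x:ℝ):ℂ) by push_cast; ring, Complex.ofReal_cpow hx1]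
  rw [hcongr] at hβ
  have hGhalf : Complex.Gamma (1/2) = (Real.sqrt π : ℂ) := by
    rw [show ((1/2:ℂ)) = ((1/2 : ℝ) : ℂ) by norm_num, Complex.Gamma_ofReal,
      Real.Gamma_one_half_eq]
  have hG1 : Complex.Gamma (11/8) = (Real.Gamma (11/8) : ℂ) := by
    rw [show ((11/8:ℂ)) = ((11/8 : ℝ) : ℂ) by norm_num, Complex.Gamma_ofReal]
  have hG2 : Complex.Gamma ((1/2) + (11/8)) = (Real.Gamma (15/8) : ℂ) := by
    rw [show ((1/2:ℂ) + 11/8) = ((15/8 : ℝ) : ℂ) by norm_num, Complex.Gamma_ofReal]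
  rw [hGhalf, hG1, hG2] at hβ
  have hreal : Real.sqrt π * Real.Gamma (11/8)
      = Real.Gamma (15/8) * ∫ x in (0:ℝ)..1, x ^ (-(1:ℝ)/2) * (1-x) ^ ((3:ℝ)/8) := by
    exact_mod_cast hβ
  have hGpos : 0 < Real.Gamma (15/8) := Real.Gamma_pos_of_pos (by norm_num)
  rw [eq_div_iff hGpos.ne']
  linarith


noncomputable def gfun : ℝ → ℝ := fun t => t ^ (-(1:ℝ)/2) * (1-t) ^ ((3:ℝ)/8)

set_option maxHeartbeats 1000000 in
lemma g_integrableOn : IntegrableOn gfun (Icc (0:ℝ) 1) := by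
  rw [integrableOn_Icc_iff_integrableOn_Ioc]
  have h1 : IntegrableOn (fun t : ℝ => t ^ (-(1:ℝ)/2)) (Ioc (0:ℝ) 1) :=
    (intervalIntegrable_rpow' (a := 0) (b := 1) (r := -(1:ℝ)/2) (by norm_num)).1
  refine MeasureTheory.Integrable.mono h1 ?_ ?_
  · refine ContinuousOn.aestronglyMeasurable ?_ measurableSet_Ioc
    intro t ht
    apply ContinuousAt.continuousWithinAt
    exact (Real.continuousAt_rpow_const _ _ (Or.inl ht.1.ne')).mul
      ((continuous_const.sub continuous_id).continuousAt.rpow_const (Or.inr (by norm_num)))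
  · filter_upwards [ae_restrict_mem measurableSet_Ioc] with t ht
    have h0 : (0:ℝ) ≤ t := ht.1.le
    have h1t : (0:ℝ) ≤ 1 - t := by linarith [ht.2]
    have hb : (1 - t) ^ ((3:ℝ)/8) ≤ 1 := by
      calc (1 - t) ^ ((3:ℝ)/8) ≤ 1 ^ ((3:ℝ)/8) :=
        Real.rpow_le_rpow h1t (by linarith) (by norm_num)
      _ = 1 := Real.one_rpow _
    have h2 : 0 ≤ t ^ (-(1:ℝ)/2) := Real.rpow_nonneg h0 _
    have h3 : 0 ≤ (1 - t) ^ ((3:ℝ)/8) := Real.rpow_nonneg h1t _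
    show |t ^ (-(1:ℝ)/2) * (1-t) ^ ((3:ℝ)/8)| ≤ |t ^ (-(1:ℝ)/2)|
    rw [abs_of_nonneg (mul_nonneg h2 h3), abs_of_nonneg h2]
    nlinarith

set_option maxHeartbeats 1000000 in
lemma cos_pow_74 : ∫ θ in (0:ℝ)..(π/2), Real.cos θ ^ ((7:ℝ)/4)
    = (1/2) * ∫ x in (0:ℝ)..1, x ^ (-(1:ℝ)/2) * (1-x) ^ ((3:ℝ)/8) := by
  have hpi : (0:ℝ) < π/2 := by positivity
  set f : ℝ → ℝ := fun θ => Real.sin θ ^ 2 with hf_def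
  set f' : ℝ → ℝ := fun θ => 2 * Real.sin θ * Real.cos θ with hf'_def
  have hmin : min (0:ℝ) (π/2) = 0 := min_eq_left hpi.le
  have hmax : max (0:ℝ) (π/2) = π/2 := max_eq_right hpi.le
  have hae0 : ∀ᵐ θ : ℝ, θ ≠ 0 := by
    simpa using (ae_iff (p := fun θ : ℝ => θ ≠ 0)).2 (by simp)
  -- the substitution
  have hsub : (∫ θ in (0:ℝ)..(π/2), f' θ • gfun (f θ)) = ∫ u in (f 0)..(f (π/2)), gfun u := by
    refine intervalIntegral.integral_comp_smul_deriv''' (f := f) (f' := f') (g := gfun)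
      ?_ ?_ ?_ ?_ ?_
    · exact (Real.continuous_sin.pow 2).continuousOn
    · intro x hx
      have : HasDerivAt f (2 * Real.sin x * Real.cos x) x := by
        simpa [mul_comm, mul_assoc, mul_left_comm] using ((Real.hasDerivAt_sin x).fun_pow 2)
      exact this.hasDerivWithinAt
    · rw [hmin, hmax]
      intro t ht
      obtain ⟨θ, hθ, rfl⟩ := ht
      have hsin : 0 < Real.sin θ := Real.sin_pos_of_pos_of_lt_pi hθ.1 (by linarith [hθ.2, pi_pos])
      have hpos : 0 < Real.sin θ ^ 2 := by positivity
      apply ContinuousAt.continuousWithinAt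
      apply ContinuousAt.mul
      · exact Real.continuousAt_rpow_const _ _ (Or.inl hpos.ne')
      · exact (continuous_const.sub continuous_id).continuousAt.rpow_const (Or.inr (by norm_num))
    · apply g_integrableOn.mono_set
      intro t ht
      obtain ⟨θ, hθ, rfl⟩ := ht
      refine ⟨by positivity, ?_⟩
      show Real.sin θ ^ 2 ≤ 1
      have := Real.sin_le_one θ
      have := Real.neg_one_le_sin θ
      nlinarith
    · -- integrability of the substituted function
      have hcont : Continuous fun θ : ℝ => 2 * Real.cos θ * |Real.cos θ| ^ ((3:ℝ)/4) :=
        (continuous_const.mul Real.continuous_cos).mul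
          (Real.continuous_cos.abs.rpow_const (fun x => Or.inr (by norm_num)))
      rw [Set.uIcc_of_le hpi.le]
      apply MeasureTheory.Integrable.congr hcont.integrableOn_Icc
      filter_upwards [ae_restrict_mem measurableSet_Icc, ae_restrict_of_ae hae0] with θ hθ hθ0
      have hθpos : 0 < θ := lt_of_le_of_ne hθ.1 (Ne.symm hθ0)
      have hsin : 0 < Real.sin θ := Real.sin_pos_of_pos_of_lt_pi hθpos (by linarith [hθ.2, pi_pos])
      have hcos : 0 ≤ Real.cos θ := Real.cos_nonneg_of_mem_Icc ⟨by linarith, hθ.2⟩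
      show 2 * Real.cos θ * |Real.cos θ| ^ ((3:ℝ)/4) = f' θ • gfun (f θ)
      show _ = (2 * Real.sin θ * Real.cos θ) •
        ((Real.sin θ ^ 2) ^ (-(1:ℝ)/2) * (1 - Real.sin θ ^ 2) ^ ((3:ℝ)/8))
      have e1 : (Real.sin θ ^ 2) ^ (-(1:ℝ)/2) = (Real.sin θ)⁻¹ := by
        rw [← Real.rpow_natCast (Real.sin θ) 2, ← Real.rpow_mul hsin.le]
        norm_num [Real.rpow_neg_one]
      have e2 : (1 - Real.sin θ ^ 2) ^ ((3:ℝ)/8) = Real.cos θ ^ ((3:ℝ)/4) := by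
        rw [← Real.cos_sq' θ, ← Real.rpow_natCast (Real.cos θ) 2, ← Real.rpow_mul hcos]
        norm_num
      rw [e1, e2, abs_of_nonneg hcos, smul_eq_mul]
      field_simp
  -- rewrite LHS of hsub
  have hL : (∫ θ in (0:ℝ)..(π/2), f' θ • gfun (f θ))
      = ∫ θ in (0:ℝ)..(π/2), 2 * Real.cos θ ^ ((7:ℝ)/4) := by
    apply intervalIntegral.integral_congr_ae
    filter_upwards [hae0] with θ hθ0 hθ
    rw [Set.uIoc_of_le hpi.le] at hθ
    have hθpos : 0 < θ := hθ.1
    have hsin : 0 < Real.sin θ := Real.sin_pos_of_pos_of_lt_pi hθpos (by linarith [hθ.2, pi_pos])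
    have hcos : 0 ≤ Real.cos θ := Real.cos_nonneg_of_mem_Icc ⟨by linarith, hθ.2⟩
    show (2 * Real.sin θ * Real.cos θ) •
        ((Real.sin θ ^ 2) ^ (-(1:ℝ)/2) * (1 - Real.sin θ ^ 2) ^ ((3:ℝ)/8)) = _
    have e1 : (Real.sin θ ^ 2) ^ (-(1:ℝ)/2) = (Real.sin θ)⁻¹ := by
      rw [← Real.rpow_natCast (Real.sin θ) 2, ← Real.rpow_mul hsin.le]
      norm_num [Real.rpow_neg_one]
    have e2 : (1 - Real.sin θ ^ 2) ^ ((3:ℝ)/8) = Real.cos θ ^ ((3:ℝ)/4) := by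
      rw [← Real.cos_sq' θ, ← Real.rpow_natCast (Real.cos θ) 2, ← Real.rpow_mul hcos]
      norm_num
    have e3 : Real.cos θ ^ ((7:ℝ)/4) = Real.cos θ * Real.cos θ ^ ((3:ℝ)/4) := by
      rw [show ((7:ℝ)/4) = 1 + 3/4 by norm_num, Real.rpow_add' hcos (by norm_num),
        Real.rpow_one]
    rw [e1, e2, e3, smul_eq_mul]
    field_simp
  have hends : f 0 = 0 ∧ f (π/2) = 1 := by
    constructor <;> simp [hf_def]
  rw [hL, hends.1, hends.2] at hsub
  rw [intervalIntegral.integral_const_mul] at hsub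
  have : ∫ x in (0:ℝ)..1, gfun x = ∫ x in (0:ℝ)..1, x ^ (-(1:ℝ)/2) * (1-x) ^ ((3:ℝ)/8) := rfl
  rw [this] at hsub
  linarith



/-- Determination of the location constant for the fractional-power oscillator:
if the Galerkin integral vanishes, then `k = (√π·Γ(15/8)/(2·Γ(11/8)))⁴`. -/
theorem fractional_location_constant (A k : ℝ) (hA : 0 < A) (hk : 0 < k)
    (hB : ∫ θ in (0:ℝ)..(π/2),
        ((A * k) ^ (-(1:ℝ)/4) * (A * Real.cos θ) - (A * Real.cos θ) ^ ((3:ℝ)/4)) * Real.cos θ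
          = 0) :
    k = (Real.sqrt π * Real.Gamma (15/8) / (2 * Real.Gamma (11/8))) ^ 4 := by
  have hpi : (0:ℝ) < π/2 := by positivity
  set c1 : ℝ := (A * k) ^ (-(1:ℝ)/4) * A with hc1
  set c2 : ℝ := A ^ ((3:ℝ)/4) with hc2
  -- rewrite the integrand
  have hcongr : ∫ θ in (0:ℝ)..(π/2),
      ((A * k) ^ (-(1:ℝ)/4) * (A * Real.cos θ) - (A * Real.cos θ) ^ ((3:ℝ)/4)) * Real.cos θ
      = ∫ θ in (0:ℝ)..(π/2), (c1 * Real.cos θ ^ 2 - c2 * Real.cos θ ^ ((7:ℝ)/4)) := by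
    apply intervalIntegral.integral_congr
    intro θ hθ
    rw [Set.uIcc_of_le hpi.le] at hθ
    have hcos : 0 ≤ Real.cos θ := Real.cos_nonneg_of_mem_Icc ⟨by linarith [hθ.1], hθ.2⟩
    have e1 : (A * Real.cos θ) ^ ((3:ℝ)/4) = c2 * Real.cos θ ^ ((3:ℝ)/4) :=
      Real.mul_rpow hA.le hcos
    have e2 : Real.cos θ ^ ((7:ℝ)/4) = Real.cos θ ^ ((3:ℝ)/4) * Real.cos θ := by
      rw [show ((7:ℝ)/4) = 3/4 + 1 by norm_num, Real.rpow_add' hcos (by norm_num),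
        Real.rpow_one]
    show ((A * k) ^ (-(1:ℝ)/4) * (A * Real.cos θ) - (A * Real.cos θ) ^ ((3:ℝ)/4)) * Real.cos θ
      = c1 * Real.cos θ ^ 2 - c2 * Real.cos θ ^ ((7:ℝ)/4)
    rw [e1, e2, hc1]
    ring
  rw [hcongr] at hB
  -- split the integral
  have hi1 : IntervalIntegrable (fun θ => c1 * Real.cos θ ^ 2) volume 0 (π/2) :=
    (continuous_const.mul (Real.continuous_cos.pow 2)).intervalIntegrable _ _
  have hi2 : IntervalIntegrable (fun θ => c2 * Real.cos θ ^ ((7:ℝ)/4)) volume 0 (π/2) :=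
    (continuous_const.mul (Real.continuous_cos.rpow_const fun _ => Or.inr (by norm_num)
      : Continuous fun θ => Real.cos θ ^ ((7:ℝ)/4))).intervalIntegrable _ _
  rw [intervalIntegral.integral_sub hi1 hi2, intervalIntegral.integral_const_mul,
    intervalIntegral.integral_const_mul] at hB
  -- evaluate the two integrals
  have hcos2 : ∫ θ in (0:ℝ)..(π/2), Real.cos θ ^ 2 = π/4 := by
    rw [integral_cos_sq]
    simp
    ring
  have h74 : ∫ θ in (0:ℝ)..(π/2), Real.cos θ ^ ((7:ℝ)/4)
      = Real.sqrt π * Real.Gamma (11/8) / (2 * Real.Gamma (15/8)) := by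
    rw [cos_pow_74, beta_real]
    ring
  rw [hcos2, h74] at hB
  -- algebra
  have hG11 : 0 < Real.Gamma (11/8) := Real.Gamma_pos_of_pos (by norm_num)
  have hG15 : 0 < Real.Gamma (15/8) := Real.Gamma_pos_of_pos (by norm_num)
  have hsq : 0 < Real.sqrt π := Real.sqrt_pos.2 pi_pos
  have hc1e : c1 = A ^ ((3:ℝ)/4) * k ^ (-(1:ℝ)/4) := by
    rw [hc1, Real.mul_rpow hA.le hk.le]
    have hAA : A ^ (-(1:ℝ)/4) * A = A ^ ((3:ℝ)/4) := by
      nth_rewrite 2 [← Real.rpow_one A]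
      rw [← Real.rpow_add hA]; norm_num
    calc A ^ (-(1:ℝ)/4) * k ^ (-(1:ℝ)/4) * A
        = (A ^ (-(1:ℝ)/4) * A) * k ^ (-(1:ℝ)/4) := by ring
      _ = A ^ ((3:ℝ)/4) * k ^ (-(1:ℝ)/4) := by rw [hAA]
  have hA34 : 0 < A ^ ((3:ℝ)/4) := Real.rpow_pos_of_pos hA _
  have key : k ^ (-(1:ℝ)/4) * (π/4)
      = Real.sqrt π * Real.Gamma (11/8) / (2 * Real.Gamma (15/8)) := by
    have := hB
    rw [hc1e] at this
    have h2 : A ^ ((3:ℝ)/4) * (k ^ (-(1:ℝ)/4) * (π/4)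
        - Real.sqrt π * Real.Gamma (11/8) / (2 * Real.Gamma (15/8))) = 0 := by
      rw [hc2] at this
      ring_nf
      ring_nf at this
      linarith
    rcases mul_eq_zero.1 h2 with h | h
    · exact absurd h hA34.ne'
    · linarith
  -- solve for k
  have hπ : Real.sqrt π * Real.sqrt π = π := Real.mul_self_sqrt pi_pos.le
  set C : ℝ := Real.sqrt π * Real.Gamma (15/8) / (2 * Real.Gamma (11/8)) with hC_def
  have hC : 0 < C := by rw [hC_def]; positivity
  have hkinv : k ^ (-(1:ℝ)/4) = C⁻¹ := by
    have hπpos := pi_pos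
    rw [hC_def, inv_div,
      eq_div_iff (by positivity : Real.sqrt π * Real.Gamma (15/8) ≠ 0)]
    have key2 : k ^ (-(1:ℝ)/4) * (π/4) * (2 * Real.Gamma (15/8))
        = Real.sqrt π * Real.Gamma (11/8) := by
      rw [key]; field_simp
    have key3 : k ^ (-(1:ℝ)/4) * (Real.sqrt π * Real.Gamma (15/8)) * Real.sqrt π
        = 2 * Real.Gamma (11/8) * Real.sqrt π := by
      linear_combination (k ^ (-(1:ℝ)/4) * Real.Gamma (15/8)) * hπ + 2 * key2
    exact mul_right_cancel₀ hsq.ne' key3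
  have hkey2 : k = (k ^ (-(1:ℝ)/4)) ^ (-(4:ℝ)) := by
    rw [← Real.rpow_mul hk.le]
    norm_num
  rw [hkey2, hkinv, Real.rpow_neg (inv_pos.2 hC).le,
    show ((4:ℝ)) = ((4:ℕ):ℝ) by norm_num, Real.rpow_natCast, inv_pow, inv_inv]
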